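/- Consider the system A₁X₁B₁ + C₁X₂D₁ = E₁ and A₂X₂B₂ + C₂X₃D₂ = E₂ over ℂ. If it is solvable, then rank[[A₁, E₁, C₁, 0],[0, D₁, 0, B₂],[0, 0, A₂, -E₂],[0, 0, 0, D₂]] = rank[[A₁, C₁, 0],[0, A₂, 0]] + rank[[D₁, B₂],[0, D₂]]. -/

import Mathlib

open Matrix

section Aux

variable {R : Type*} [Field R]

lemma myRangeProdMap {M N P Q : Type*} [AddCommGroup M] [AddCommGroup N] [AddCommGroup P]
    [AddCommGroup Q] [Module R M] [Module R N] [Module R P] [Module R Q]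
    (f : M →ₗ[R] N) (g : P →ₗ[R] Q) :
    LinearMap.range (f.prodMap g) = (LinearMap.range f).prod (LinearMap.range g) := by
  ext ⟨x, y⟩
  simp only [LinearMap.mem_range, Submodule.mem_prod, LinearMap.prodMap_apply, Prod.ext_iff,
    Prod.exists]
  constructor
  · rintro ⟨a, b, h1, h2⟩; exact ⟨⟨a, h1⟩, ⟨b, h2⟩⟩
  · rintro ⟨⟨a, ha⟩, ⟨b, hb⟩⟩; exact ⟨a, b, ha, hb⟩

def myProdEquiv {M N : Type*} [AddCommGroup M] [AddCommGroup N] [Module R M] [Module R N]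
    (p : Submodule R M) (q : Submodule R N) : (p.prod q) ≃ₗ[R] p × q where
  toFun x := (⟨x.1.1, x.2.1⟩, ⟨x.1.2, x.2.2⟩)
  invFun y := ⟨(y.1.1, y.2.1), y.1.2, y.2.2⟩
  map_add' _ _ := rfl
  map_smul' _ _ := rfl
  left_inv _ := rfl
  right_inv _ := rfl

lemma myFinrankProd {M N : Type*} [AddCommGroup M] [AddCommGroup N] [Module R M] [Module R N]
    [FiniteDimensional R M] [FiniteDimensional R N]
    (p : Submodule R M) (q : Submodule R N) :
    Module.finrank R (p.prod q) = Module.finrank R p + Module.finrank R q := by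
  rw [(myProdEquiv p q).finrank_eq, Module.finrank_prod]

lemma myRankSubmatrix {m n m' n' : Type*} [Fintype m] [Fintype n] [Fintype m'] [Fintype n']
    (A : Matrix m n R) (e₁ : m' ≃ m) (e₂ : n' ≃ n) :
    (A.submatrix e₁ e₂).rank = A.rank := by
  rw [Matrix.rank, Matrix.rank, mulVecLin_submatrix, LinearMap.range_comp, LinearMap.range_comp,
    show LinearMap.funLeft R R e₂.symm = LinearEquiv.funCongrLeft R R e₂.symm from rfl,
    LinearEquiv.range, Submodule.map_top,
    show LinearMap.funLeft R R ⇑e₁ = LinearEquiv.funCongrLeft R R e₁ from rfl,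
    LinearEquiv.finrank_map_eq]

lemma myRankFromBlocksDiag {m n p q : Type*} [Fintype m] [Fintype n] [Fintype p] [Fintype q]
    (A : Matrix m n R) (D : Matrix p q R) :
    (fromBlocks A 0 0 D).rank = A.rank + D.rank := by
  have hM : (fromBlocks A (0 : Matrix m q R) (0 : Matrix p n R) D).mulVecLin =
      ((LinearEquiv.sumArrowLequivProdArrow m p R R).symm : ((m → R) × (p → R)) →ₗ[R] _) ∘ₗ
        (A.mulVecLin.prodMap D.mulVecLin) ∘ₗ
        ((LinearEquiv.sumArrowLequivProdArrow n q R R : (n ⊕ q → R) ≃ₗ[R] _) :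
          (n ⊕ q → R) →ₗ[R] _) := by
    apply LinearMap.ext
    intro v
    have hv : v = Sum.elim (v ∘ Sum.inl) (v ∘ Sum.inr) := (Sum.elim_comp_inl_inr v).symm
    simp only [mulVecLin_apply, LinearMap.comp_apply, LinearEquiv.coe_coe]
    rw [hv, fromBlocks_mulVec]
    simp [LinearEquiv.sumArrowLequivProdArrow, Equiv.sumArrowEquivProdArrow, Matrix.zero_mulVec]
  rw [Matrix.rank, hM, LinearMap.range_comp, LinearMap.range_comp_of_range_eq_top _
    (LinearEquiv.range _), LinearEquiv.finrank_map_eq, myRangeProdMap, myFinrankProd,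
    Matrix.rank, Matrix.rank]

lemma myRankFromColumnsZero {m n k : Type*} [Fintype m] [Fintype n] [Fintype k] [DecidableEq n]
    (A : Matrix m n R) :
    (fromCols A (0 : Matrix m k R)).rank = A.rank := by
  apply le_antisymm
  · have : fromCols A (0 : Matrix m k R) = A * fromCols (1 : Matrix n n R) (0 : Matrix n k R) := by
      rw [mul_fromCols, Matrix.mul_one, Matrix.mul_zero]
    rw [this]
    exact Matrix.rank_mul_le_left _ _
  · have : A = fromCols A (0 : Matrix m k R) * fromRows (1 : Matrix n n R) (0 : Matrix k n R) := by
      rw [fromCols_mul_fromRows, Matrix.mul_one, Matrix.zero_mul, add_zero]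
    conv_lhs => rw [this]
    exact Matrix.rank_mul_le_left _ _

lemma myFromColumnsAdd {m n₁ n₂ : Type*} (A₁ A₂ : Matrix m n₁ R) (B₁ B₂ : Matrix m n₂ R) :
    fromCols A₁ B₁ + fromCols A₂ B₂ = fromCols (A₁ + A₂) (B₁ + B₂) := by
  ext i (j | j) <;> simp

def sumShuffle (α β γ δ : Type*) : (α ⊕ (β ⊕ (γ ⊕ δ))) ≃ ((α ⊕ γ) ⊕ (β ⊕ δ)) :=
  ⟨fun x => match x with
    | .inl a => .inl (.inl a)
    | .inr (.inl b) => .inr (.inl b)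
    | .inr (.inr (.inl c)) => .inl (.inr c)
    | .inr (.inr (.inr d)) => .inr (.inr d),
   fun y => match y with
    | .inl (.inl a) => .inl a
    | .inl (.inr c) => .inr (.inr (.inl c))
    | .inr (.inl b) => .inr (.inl b)
    | .inr (.inr d) => .inr (.inr (.inr d)),
   by rintro (a | b | c | d) <;> rfl,
   by rintro ((a | c) | (b | d)) <;> rfl⟩

end Aux

theorem two_step_chain_rank_eq_36
    {m₁ p₁ q₁ n₁ m₂ p₂ q₂ n₂ p₃ q₃ : ℕ}
    (A₁ : Matrix (Fin m₁) (Fin p₁) ℂ) (B₁ : Matrix (Fin q₁) (Fin n₁) ℂ)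
    (C₁ : Matrix (Fin m₁) (Fin p₂) ℂ) (D₁ : Matrix (Fin q₂) (Fin n₁) ℂ)
    (E₁ : Matrix (Fin m₁) (Fin n₁) ℂ)
    (A₂ : Matrix (Fin m₂) (Fin p₂) ℂ) (B₂ : Matrix (Fin q₂) (Fin n₂) ℂ)
    (C₂ : Matrix (Fin m₂) (Fin p₃) ℂ) (D₂ : Matrix (Fin q₃) (Fin n₂) ℂ)
    (E₂ : Matrix (Fin m₂) (Fin n₂) ℂ)
    (X₁ : Matrix (Fin p₁) (Fin q₁) ℂ) (X₂ : Matrix (Fin p₂) (Fin q₂) ℂ)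
    (X₃ : Matrix (Fin p₃) (Fin q₃) ℂ)
    (h₁ : A₁ * X₁ * B₁ + C₁ * X₂ * D₁ = E₁)
    (h₂ : A₂ * X₂ * B₂ + C₂ * X₃ * D₂ = E₂) :
    (Matrix.fromRows
      (Matrix.fromCols A₁ (Matrix.fromCols E₁ (Matrix.fromCols C₁
        (0 : Matrix (Fin m₁) (Fin n₂) ℂ))))
      (Matrix.fromRows
        (Matrix.fromCols (0 : Matrix (Fin q₂) (Fin p₁) ℂ)
          (Matrix.fromCols D₁ (Matrix.fromCols (0 : Matrix (Fin q₂) (Fin p₂) ℂ) B₂)))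
        (Matrix.fromRows
          (Matrix.fromCols (0 : Matrix (Fin m₂) (Fin p₁) ℂ)
            (Matrix.fromCols (0 : Matrix (Fin m₂) (Fin n₁) ℂ)
              (Matrix.fromCols A₂ (-E₂))))
          (Matrix.fromCols (0 : Matrix (Fin q₃) (Fin p₁) ℂ)
            (Matrix.fromCols (0 : Matrix (Fin q₃) (Fin n₁) ℂ)
              (Matrix.fromCols (0 : Matrix (Fin q₃) (Fin p₂) ℂ) D₂)))))).rank =
    (Matrix.fromRows
      (Matrix.fromCols A₁ (Matrix.fromCols C₁ (0 : Matrix (Fin m₁) (Fin p₃) ℂ)))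
      (Matrix.fromCols (0 : Matrix (Fin m₂) (Fin p₁) ℂ)
        (Matrix.fromCols A₂ (0 : Matrix (Fin m₂) (Fin p₃) ℂ)))).rank +
    (Matrix.fromBlocks D₁ B₂ 0 D₂).rank := by
  classical
  -- Abbreviations
  set P : Matrix (Fin m₁ ⊕ Fin m₂) (Fin p₁ ⊕ Fin p₂) ℂ := fromBlocks A₁ C₁ 0 A₂ with hP
  set Q : Matrix (Fin q₂ ⊕ Fin q₃) (Fin n₁ ⊕ Fin n₂) ℂ := fromBlocks D₁ B₂ 0 D₂ with hQ
  set M' : Matrix (Fin m₁ ⊕ (Fin q₂ ⊕ (Fin m₂ ⊕ Fin q₃)))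
      (Fin p₁ ⊕ (Fin n₁ ⊕ (Fin p₂ ⊕ Fin n₂))) ℂ :=
    fromBlocks A₁ (fromCols 0 (fromCols C₁ 0)) 0
      (fromBlocks D₁ (fromCols 0 B₂) 0 (fromBlocks A₂ 0 0 D₂)) with hM'
  set U : Matrix (Fin m₁ ⊕ (Fin q₂ ⊕ (Fin m₂ ⊕ Fin q₃)))
      (Fin m₁ ⊕ (Fin q₂ ⊕ (Fin m₂ ⊕ Fin q₃))) ℂ :=
    fromBlocks 1 (fromCols (C₁ * X₂) 0) 0
      (fromBlocks 1 0 0 (fromBlocks 1 (-(C₂ * X₃)) 0 1)) with hU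
  set V : Matrix (Fin p₁ ⊕ (Fin n₁ ⊕ (Fin p₂ ⊕ Fin n₂)))
      (Fin p₁ ⊕ (Fin n₁ ⊕ (Fin p₂ ⊕ Fin n₂))) ℂ :=
    fromBlocks 1 (fromCols (X₁ * B₁) 0) 0
      (fromBlocks 1 0 0 (fromBlocks 1 (-(X₂ * B₂)) 0 1)) with hV
  have hUM : U * M' = fromBlocks A₁
      (fromCols (C₁ * X₂ * D₁) (fromCols C₁ (C₁ * X₂ * B₂))) 0
      (fromBlocks D₁ (fromCols 0 B₂) 0 (fromBlocks A₂ (-(C₂ * X₃ * D₂)) 0 D₂)) := by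
    rw [hU, hM']
    simp only [fromBlocks_multiply, fromCols_mul_fromBlocks, mul_fromCols,
      Matrix.mul_one, Matrix.one_mul, Matrix.mul_zero, Matrix.zero_mul, add_zero, zero_add,
      myFromColumnsAdd, Matrix.neg_mul, Matrix.mul_assoc]
  have hUMV : U * M' * V = fromBlocks A₁
      (fromCols E₁ (fromCols C₁ 0)) 0
      (fromBlocks D₁ (fromCols 0 B₂) 0 (fromBlocks A₂ (-E₂) 0 D₂)) := by
    rw [hUM, hV]
    simp only [fromBlocks_multiply, fromCols_mul_fromBlocks, mul_fromCols,
      Matrix.mul_one, Matrix.one_mul, Matrix.mul_zero, Matrix.zero_mul, add_zero, zero_add,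
      myFromColumnsAdd, Matrix.neg_mul, Matrix.mul_neg, Matrix.mul_assoc]
    rw [← h₁, ← h₂]
    simp [Matrix.mul_assoc, neg_add, add_comm]
  have key : (Matrix.fromRows
      (Matrix.fromCols A₁ (Matrix.fromCols E₁ (Matrix.fromCols C₁
        (0 : Matrix (Fin m₁) (Fin n₂) ℂ))))
      (Matrix.fromRows
        (Matrix.fromCols (0 : Matrix (Fin q₂) (Fin p₁) ℂ)
          (Matrix.fromCols D₁ (Matrix.fromCols (0 : Matrix (Fin q₂) (Fin p₂) ℂ) B₂)))
        (Matrix.fromRows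
          (Matrix.fromCols (0 : Matrix (Fin m₂) (Fin p₁) ℂ)
            (Matrix.fromCols (0 : Matrix (Fin m₂) (Fin n₁) ℂ)
              (Matrix.fromCols A₂ (-E₂))))
          (Matrix.fromCols (0 : Matrix (Fin q₃) (Fin p₁) ℂ)
            (Matrix.fromCols (0 : Matrix (Fin q₃) (Fin n₁) ℂ)
              (Matrix.fromCols (0 : Matrix (Fin q₃) (Fin p₂) ℂ) D₂)))))) = U * M' * V := by
    rw [hUMV]
    ext i j
    rcases i with i | i | i | i <;> rcases j with j | j | j | j <;>
      simp [fromBlocks]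
  have hUdet : IsUnit U.det := by
    rw [hU]
    simp [det_fromBlocks_zero₂₁]
  have hVdet : IsUnit V.det := by
    rw [hV]
    simp [det_fromBlocks_zero₂₁]
  have hM'sub : M' = (fromBlocks P 0 0 Q).submatrix
      (sumShuffle (Fin m₁) (Fin q₂) (Fin m₂) (Fin q₃))
      (sumShuffle (Fin p₁) (Fin n₁) (Fin p₂) (Fin n₂)) := by
    rw [hM', hP, hQ]
    ext i j
    rcases i with i | i | i | i <;> rcases j with j | j | j | j <;>
      simp [sumShuffle, fromBlocks, Matrix.submatrix]
  have hRHS1 : (Matrix.fromRows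
      (Matrix.fromCols A₁ (Matrix.fromCols C₁ (0 : Matrix (Fin m₁) (Fin p₃) ℂ)))
      (Matrix.fromCols (0 : Matrix (Fin m₂) (Fin p₁) ℂ)
        (Matrix.fromCols A₂ (0 : Matrix (Fin m₂) (Fin p₃) ℂ)))) =
      (fromCols P (0 : Matrix (Fin m₁ ⊕ Fin m₂) (Fin p₃) ℂ)).submatrix
        (Equiv.refl (Fin m₁ ⊕ Fin m₂))
        (Equiv.sumAssoc (Fin p₁) (Fin p₂) (Fin p₃)).symm := by
    rw [hP]
    ext i j
    rcases i with i | i <;> rcases j with j | j | j <;>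
      simp [fromBlocks, Matrix.submatrix]
  rw [key, hRHS1]
  rw [Matrix.rank_mul_eq_left_of_isUnit_det V _ hVdet,
    Matrix.rank_mul_eq_right_of_isUnit_det U M' hUdet,
    hM'sub, myRankSubmatrix, myRankFromBlocksDiag, myRankSubmatrix, myRankFromColumnsZero]
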